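/- arXiv:1308.5796 — 6 statements merged into one kernel-verified Lean document; each statement's English description precedes it below -/
import Mathlib

section
/- Let (X,d,μ) be an upper doubling metric measure space. Then for every ρ ∈ [1,∞) there exists a positive constant C_ρ, depending on ρ, such that for all balls B ⊂ S in X with r_S ≤ ρ r_B, δ(B,S) ≤ C_ρ. -/
open MeasureTheory Metric Set
open scoped ENNReal NNReal BigOperators

noncomputable section

variable {X : Type*} [MetricSpace X] [MeasurableSpace X] [BorelSpace X]

/-- `(X,d,μ)` is upper doubling with dominating function `lam` and constant `Cl`:
`r ↦ lam x r` is non-decreasing (on `(0,∞)`), positive, and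
`μ(B(x,r)) ≤ lam x r ≤ Cl * lam x (r/2)`. -/
def UpperDoubling (μ : Measure X) (lam : X → ℝ → ℝ) (Cl : ℝ) : Prop :=
  1 < Cl ∧
  (∀ (x : X) (r : ℝ), 0 < r → 0 < lam x r) ∧
  (∀ (x : X) (r s : ℝ), 0 < r → r ≤ s → lam x r ≤ lam x s) ∧
  (∀ (x : X) (r : ℝ), 0 < r → μ (ball x r) ≤ ENNReal.ofReal (lam x r)) ∧
  (∀ (x : X) (r : ℝ), 0 < r → lam x r ≤ Cl * lam x (r / 2))

/-- the extra compatibility condition `lam x r ≤ Cl * lam y r` whenever `d(x,y) ≤ r`. -/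
def DomCompat (lam : X → ℝ → ℝ) (Cl : ℝ) : Prop :=
  ∀ (x y : X) (r : ℝ), 0 < r → dist x y ≤ r → lam x r ≤ Cl * lam y r

/-- `(X,d)` is geometrically doubling with constant `N0`. -/
def GeomDoubling (N0 : ℕ) : Prop :=
  ∀ (x : X) (r : ℝ), 0 < r → ∃ t : Finset X,
    t.card ≤ N0 ∧ ball x r ⊆ ⋃ y ∈ t, ball y (r / 2)

/-- size condition for the kernel `K`. -/
def SizeCond (lam : X → ℝ → ℝ) (K : X → X → ℂ) (C : ℝ) : Prop :=
  ∀ x y : X, x ≠ y → ‖K x y‖ ≤ C / lam x (dist x y)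

/-- Hörmander condition for the kernel `K`. -/
def HormanderCond (μ : Measure X) (K : X → X → ℂ) (C : ℝ) : Prop :=
  ∀ x x' : X, x ≠ x' →
    ∫ y in {y : X | 2 * dist x x' ≤ dist x y},
      (‖K x y - K x' y‖ + ‖K y x - K y x'‖) ∂μ ≤ C

/-- the truncated operator `T_ε`. -/
def Ttr (μ : Measure X) (K : X → X → ℂ) (ε : ℝ) (f : X → ℂ) (x : X) : ℂ :=
  ∫ y in {y : X | ε < dist x y}, K x y * f y ∂μ

/-- the maximal Calderón–Zygmund operator `T_*`. -/
def Tstar (μ : Measure X) (K : X → X → ℂ) (f : X → ℂ) (x : X) : ℝ :=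
  ⨆ ε : {ε : ℝ // 0 < ε}, ‖Ttr μ K ε.1 f x‖

/-- `f ∈ L^∞_b(μ)`: bounded with bounded support. -/
def LinfB (μ : Measure X) (f : X → ℂ) : Prop :=
  MemLp f ⊤ μ ∧ Bornology.IsBounded (Function.support f)

/-- the coefficient `δ(B,S)` for balls `B = B(xB,rB) ⊆ S = B(xS,rS)`. -/
def ballδ (μ : Measure X) (lam : X → ℝ → ℝ) (xB : X) (rB : ℝ) (xS : X) (rS : ℝ) : ℝ≥0∞ :=
  ∫⁻ x in ball xS (2 * rS) \ ball xB rB, ENNReal.ofReal (1 / lam xB (dist x xB)) ∂μ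

/-- the ball `B(x,r)` is `(α,β)`-doubling. -/
def IsDoubling (μ : Measure X) (α β : ℝ) (x : X) (r : ℝ) : Prop :=
  μ (ball x (α * r)) ≤ ENNReal.ofReal β * μ (ball x r)

/-- mean of `f` over the ball `B(x,r)`. -/
def mB (μ : Measure X) (f : X → ℝ) (x : X) (r : ℝ) : ℝ :=
  (μ (ball x r)).toReal⁻¹ * ∫ y in ball x r, f y ∂μ

open Classical in
/-- smallest `j` such that `6^j B(x,r)` is `(6,β)`-doubling (junk value `0` if none). -/
def jtilde (μ : Measure X) (β : ℝ) (x : X) (r : ℝ) : ℕ :=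
  if h : ∃ j : ℕ, IsDoubling μ 6 β x (6 ^ j * r) then Nat.find h else 0

/-- radius of the smallest `(6,β)`-doubling ball `B̃` of the form `6^j B(x,r)`. -/
def tildeRad (μ : Measure X) (β : ℝ) (x : X) (r : ℝ) : ℝ :=
  6 ^ (jtilde μ β x r) * r

/-- the sharp maximal function `M^♯`. -/
def sharpMax (μ : Measure X) (lam : X → ℝ → ℝ) (β : ℝ) (f : X → ℝ) (x : X) : ℝ :=
  (⨆ B : {B : X × ℝ // 0 < B.2 ∧ x ∈ ball B.1 B.2},
    (μ (ball B.1.1 (5 * B.1.2))).toReal⁻¹ *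
      ∫ y in ball B.1.1 B.1.2,
        |f y - mB μ f B.1.1 (tildeRad μ β B.1.1 B.1.2)| ∂μ) +
  (⨆ P : {P : (X × ℝ) × (X × ℝ) //
      0 < P.1.2 ∧ 0 < P.2.2 ∧ x ∈ ball P.1.1 P.1.2 ∧
      ball P.1.1 P.1.2 ⊆ ball P.2.1 P.2.2 ∧
      IsDoubling μ 6 β P.1.1 P.1.2 ∧ IsDoubling μ 6 β P.2.1 P.2.2},
    |mB μ f P.1.1.1 P.1.1.2 - mB μ f P.1.2.1 P.1.2.2| /
      (1 + (ballδ μ lam P.1.1.1 P.1.1.2 P.1.2.1 P.1.2.2).toReal))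

/-- the non-centered doubling maximal function `N`. -/
def Nmax (μ : Measure X) (β : ℝ) (f : X → ℝ) (x : X) : ℝ :=
  ⨆ B : {B : X × ℝ // 0 < B.2 ∧ x ∈ ball B.1 B.2 ∧ IsDoubling μ 6 β B.1 B.2},
    (μ (ball B.1.1 B.1.2)).toReal⁻¹ * ∫ y in ball B.1.1 B.1.2, |f y| ∂μ

/-- the maximal function `M_{r,(5)}`. -/
def Mr5 (μ : Measure X) (r : ℝ) (g : X → ℝ) (x : X) : ℝ :=
  ⨆ B : {B : X × ℝ // 0 < B.2 ∧ x ∈ ball B.1 B.2},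
    ((μ (ball B.1.1 (5 * B.1.2))).toReal⁻¹ *
      ∫ y in ball B.1.1 B.1.2, |g y| ^ r ∂μ) ^ (1 / r)

/-- the sharp maximal function `M_r^♯ f = (M^♯(|f|^r))^{1/r}`. -/
def MrSharp (μ : Measure X) (lam : X → ℝ → ℝ) (β r : ℝ) (g : X → ℝ) (x : X) : ℝ :=
  (sharpMax μ lam β (fun y => |g y| ^ r) x) ^ (1 / r)

/-- the Hardy–Littlewood type maximal function `M_(5)`. -/
def M5 (μ : Measure X) (g : X → ℂ) (x : X) : ℝ :=
  ⨆ B : {B : X × ℝ // 0 < B.2 ∧ x ∈ ball B.1 B.2},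
    (μ (ball B.1.1 (5 * B.1.2))).toReal⁻¹ * ∫ y in ball B.1.1 B.1.2, ‖g y‖ ∂μ

/-- the weak `L^{p,∞}(μ)` quasinorm. -/
def wkNorm (μ : Measure X) (g : X → ℝ) (p : ℝ) : ℝ≥0∞ :=
  ⨆ t : ℝ≥0, (t : ℝ≥0∞) * μ {x : X | (t : ℝ) < |g x|} ^ (1 / p)

/-- `ω_i := χ_{6B_i} / ∑_k χ_{6B_k}`. -/
def omegaCZ {ι : Type*} (xB : ι → X) (rB : ι → ℝ) (i : ι) (x : X) : ℝ :=
  Set.indicator (ball (xB i) (6 * rB i)) (fun _ => (1 : ℝ)) x /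
    ∑ᶠ k, Set.indicator (ball (xB k) (6 * rB k)) (fun _ => (1 : ℝ)) x

theorem delta_bounded_of_comparable_radii
    (μ : Measure X) (lam : X → ℝ → ℝ) (Cl : ℝ)
    (hud : UpperDoubling μ lam Cl) (hdc : DomCompat lam Cl) :
    ∀ ρ : ℝ, 1 ≤ ρ → ∃ Cρ : ℝ, 0 < Cρ ∧
      ∀ (xB xS : X) (rB rS : ℝ), 0 < rB → 0 < rS →
        ball xB rB ⊆ ball xS rS → rS ≤ ρ * rB →
        ballδ μ lam xB rB xS rS ≤ ENNReal.ofReal Cρ := by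
  obtain ⟨hCl, hpos, hmono, hmeas, hdoub⟩ := hud
  have hCl0 : (0:ℝ) < Cl := lt_trans one_pos hCl
  -- iterated doubling
  have key : ∀ (n : ℕ) (x : X) (r : ℝ), 0 < r → lam x (2 ^ n * r) ≤ Cl ^ n * lam x r := by
    intro n
    induction n with
    | zero => intro x r hr; simp
    | succ n ih =>
      intro x r hr
      have h2r : 0 < 2 * r := by linarith
      have h1 : lam x (2 ^ (n+1) * r) = lam x (2 ^ n * (2 * r)) := by ring_nf
      have h2 : lam x (2 ^ n * (2 * r)) ≤ Cl ^ n * lam x (2 * r) := ih x (2*r) h2r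
      have h3 : lam x (2 * r) ≤ Cl * lam x r := by
        have := hdoub x (2 * r) h2r
        have heq : (2 * r) / 2 = r := by ring
        rwa [heq] at this
      calc lam x (2 ^ (n+1) * r) = lam x (2 ^ n * (2 * r)) := h1
        _ ≤ Cl ^ n * lam x (2 * r) := h2
        _ ≤ Cl ^ n * (Cl * lam x r) := by
            exact mul_le_mul_of_nonneg_left h3 (pow_nonneg (le_of_lt hCl0) n)
        _ = Cl ^ (n+1) * lam x r := by ring
  intro ρ hρ
  set n : ℕ := ⌈3 * ρ⌉₊ with hn
  refine ⟨Cl ^ n, pow_pos hCl0 n, ?_⟩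
  intro xB xS rB rS hrB hrS hBS hrSρ
  have hlamB : 0 < lam xB rB := hpos xB rB hrB
  have h3ρ : 3 * ρ ≤ 2 ^ n := by
    calc 3 * ρ ≤ (n : ℝ) := Nat.le_ceil _
      _ ≤ 2 ^ n := by exact_mod_cast Nat.le_of_lt (Nat.lt_two_pow_self (n := n))
  -- d(xB, xS) < rS
  have hdBS : dist xB xS < rS := hBS (mem_ball_self hrB)
  -- the annulus is contained in ball xB (2^n * rB)
  have hsub : ball xS (2 * rS) \ ball xB rB ⊆ ball xB (2 ^ n * rB) := by
    intro x hx
    have hx1 : dist x xS < 2 * rS := mem_ball.1 hx.1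
    have : dist x xB < 3 * rS := by
      calc dist x xB ≤ dist x xS + dist xS xB := dist_triangle _ _ _
        _ < 2 * rS + rS := by
            have := hdBS; rw [dist_comm xB xS] at this; linarith
        _ = 3 * rS := by ring
    have h2 : 3 * rS ≤ 2 ^ n * rB := by
      calc 3 * rS ≤ 3 * (ρ * rB) := by nlinarith
        _ = (3 * ρ) * rB := by ring
        _ ≤ 2 ^ n * rB := by nlinarith
    exact mem_ball.2 (lt_of_lt_of_le this h2)
  -- pointwise bound of integrand on the annulus
  have hbound : ∀ x ∈ ball xS (2 * rS) \ ball xB rB,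
      ENNReal.ofReal (1 / lam xB (dist x xB)) ≤ ENNReal.ofReal (1 / lam xB rB) := by
    intro x hx
    have hxd : rB ≤ dist x xB := by
      have := hx.2
      simpa [mem_ball, not_lt] using this
    have hmon := hmono xB rB (dist x xB) hrB hxd
    exact ENNReal.ofReal_le_ofReal
      (one_div_le_one_div_of_le hlamB hmon)
  have hAmeas : MeasurableSet (ball xS (2 * rS) \ ball xB rB) :=
    (measurableSet_ball).diff measurableSet_ball
  calc ballδ μ lam xB rB xS rS
      ≤ ∫⁻ _ in ball xS (2 * rS) \ ball xB rB, ENNReal.ofReal (1 / lam xB rB) ∂μ :=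
        setLIntegral_mono' hAmeas hbound
    _ = ENNReal.ofReal (1 / lam xB rB) * μ (ball xS (2 * rS) \ ball xB rB) := by
        rw [setLIntegral_const]
    _ ≤ ENNReal.ofReal (1 / lam xB rB) * μ (ball xB (2 ^ n * rB)) :=
        mul_le_mul_right (measure_mono hsub) _
    _ ≤ ENNReal.ofReal (1 / lam xB rB) * ENNReal.ofReal (lam xB (2 ^ n * rB)) := by
        have hr' : 0 < (2:ℝ) ^ n * rB := by positivity
        exact mul_le_mul_right (hmeas xB _ hr') _
    _ ≤ ENNReal.ofReal (1 / lam xB rB) * ENNReal.ofReal (Cl ^ n * lam xB rB) := by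
        exact mul_le_mul_right (ENNReal.ofReal_le_ofReal (key n xB rB hrB)) _
    _ = ENNReal.ofReal ((1 / lam xB rB) * (Cl ^ n * lam xB rB)) := by
        rw [← ENNReal.ofReal_mul (by positivity)]
    _ = ENNReal.ofReal (Cl ^ n) := by
        congr 1; field_simp

end
end

section
/- Let (X,d,μ) be an upper doubling, geometrically doubling metric measure space. For every α ∈ (1,∞) and every fixed β_α > max{α^n, α^ν}, where ν := log₂ C_λ and n := log₂ N₀, there exists a positive constant C_α, depending on α, such that for every ball B ⊂ X, δ(B, B̃^α) ≤ C_α, where B̃^α denotes the smallest (α,β_α)-doubling ball of the form α^j B with j ∈ ℤ≥0 (such a ball exists since β_α > C_λ^{log₂ α}). -/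
open MeasureTheory Metric Set
open scoped ENNReal NNReal BigOperators

noncomputable section

variable {X : Type*} [MetricSpace X] [MeasurableSpace X] [BorelSpace X]

private lemma lam_iter {Y : Type*} (lam : Y → ℝ → ℝ) (Cl : ℝ) (hCl0 : 0 < Cl)
    (hdoub : ∀ (x : Y) (r : ℝ), 0 < r → lam x r ≤ Cl * lam x (r / 2)) (x : Y) :
    ∀ (m : ℕ) (s : ℝ), 0 < s → lam x s ≤ Cl ^ m * lam x (s / 2 ^ m) := by
  intro m
  induction m with
  | zero => intro s hs; simp
  | succ m ih =>
      intro s hs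
      calc lam x s ≤ Cl ^ m * lam x (s / 2 ^ m) := ih s hs
      _ ≤ Cl ^ m * (Cl * lam x (s / 2 ^ m / 2)) :=
          mul_le_mul_of_nonneg_left (hdoub x (s / 2 ^ m) (by positivity)) (by positivity)
      _ = Cl ^ (m + 1) * lam x (s / 2 ^ (m + 1)) := by
          rw [div_div, ← pow_succ]; ring

private lemma lam_scale {Y : Type*} (lam : Y → ℝ → ℝ) (Cl : ℝ) (hCl : 1 < Cl)
    (hpos : ∀ (x : Y) (r : ℝ), 0 < r → 0 < lam x r)
    (hmono : ∀ (x : Y) (r s : ℝ), 0 < r → r ≤ s → lam x r ≤ lam x s)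
    (hdoub : ∀ (x : Y) (r : ℝ), 0 < r → lam x r ≤ Cl * lam x (r / 2))
    (x : Y) (a b : ℝ) (ha : 0 < a) (hab : a ≤ b) :
    lam x b ≤ Cl * (b / a) ^ Real.logb 2 Cl * lam x a := by
  have hb : 0 < b := ha.trans_le hab
  have hCl0 : 0 < Cl := by linarith
  set t := b / a with htdef
  have ht0 : 0 < t := by positivity
  have ht1 : 1 ≤ t := (one_le_div ha).2 hab
  have hlog : 0 ≤ Real.logb 2 t := Real.logb_nonneg one_lt_two ht1
  set m := ⌈Real.logb 2 t⌉₊ with hm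
  have h2m : t ≤ 2 ^ m := by
    have h1 : t = (2:ℝ) ^ Real.logb 2 t :=
      (Real.rpow_logb two_pos (by norm_num) ht0).symm
    have h2 : (2:ℝ) ^ Real.logb 2 t ≤ (2:ℝ) ^ (m : ℝ) :=
      Real.rpow_le_rpow_of_exponent_le one_le_two (Nat.le_ceil _)
    rw [Real.rpow_natCast] at h2
    exact h1.le.trans h2
  have hba : b / 2 ^ m ≤ a := by
    rw [div_le_iff₀ (by positivity)]
    have h3 : b ≤ 2 ^ m * a := (div_le_iff₀ ha).1 h2m
    linarith
  have h1 : lam x b ≤ Cl ^ m * lam x a :=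
    (lam_iter lam Cl hCl0 hdoub x m b hb).trans
      (mul_le_mul_of_nonneg_left (hmono x (b / 2 ^ m) a (by positivity) hba)
        (by positivity))
  have key : Cl ^ Real.logb 2 t = t ^ Real.logb 2 Cl := by
    have e1 : Cl ^ Real.logb 2 t = (2:ℝ) ^ (Real.logb 2 Cl * Real.logb 2 t) := by
      rw [Real.rpow_mul (by norm_num : (0:ℝ) ≤ 2),
        Real.rpow_logb two_pos (by norm_num) hCl0]
    have e2 : t ^ Real.logb 2 Cl = (2:ℝ) ^ (Real.logb 2 t * Real.logb 2 Cl) := by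
      rw [Real.rpow_mul (by norm_num : (0:ℝ) ≤ 2),
        Real.rpow_logb two_pos (by norm_num) ht0]
    rw [e1, e2, mul_comm]
  have h2 : (Cl : ℝ) ^ m ≤ Cl * t ^ Real.logb 2 Cl := by
    have e0 : (Cl : ℝ) ^ m = Cl ^ (m : ℝ) := (Real.rpow_natCast Cl m).symm
    have e1 : Cl ^ (m : ℝ) ≤ Cl ^ (Real.logb 2 t + 1) := by
      apply Real.rpow_le_rpow_of_exponent_le hCl.le
      have := Nat.ceil_lt_add_one hlog
      rw [hm]; linarith
    have e2 : Cl ^ (Real.logb 2 t + 1) = Cl ^ Real.logb 2 t * Cl := by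
      rw [Real.rpow_add hCl0, Real.rpow_one]
    rw [e0]; rw [e2, key] at e1; linarith
  calc lam x b ≤ Cl ^ m * lam x a := h1
  _ ≤ Cl * t ^ Real.logb 2 Cl * lam x a :=
      mul_le_mul_of_nonneg_right h2 (hpos x a ha).le

theorem delta_to_smallest_doubling_ball
    (μ : Measure X) (lam : X → ℝ → ℝ) (Cl : ℝ) (N0 : ℕ)
    (hud : UpperDoubling μ lam Cl) (hdc : DomCompat lam Cl)
    (hgd : GeomDoubling (X := X) N0)
    (α : ℝ) (hα : 1 < α) (βα : ℝ)
    (hβα : max (α ^ Real.logb 2 N0) (α ^ Real.logb 2 Cl) < βα) :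
    ∃ Cα : ℝ, 0 < Cα ∧ ∀ (x : X) (r : ℝ), 0 < r → ∀ j : ℕ,
      IsDoubling μ α βα x (α ^ j * r) →
      (∀ k : ℕ, k < j → ¬ IsDoubling μ α βα x (α ^ k * r)) →
      ballδ μ lam x r x (α ^ j * r) ≤ ENNReal.ofReal Cα := by
  obtain ⟨hCl, hpos, hmono, hmeas, hdoub⟩ := hud
  have hα0 : (0:ℝ) < α := by linarith
  set ν := Real.logb 2 Cl with hν
  have hαν : 0 < α ^ ν := Real.rpow_pos_of_pos hα0 ν
  have hq1 : α ^ ν < βα := lt_of_le_of_lt (le_max_right _ _) hβα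
  have hβpos : 0 < βα := lt_trans hαν hq1
  set q := α ^ ν / βα with hqdef
  have hq0 : 0 ≤ q := by positivity
  have hqlt : q < 1 := (div_lt_one hβpos).2 hq1
  have h1q : 0 < 1 - q := by linarith
  have hCl0 : (0:ℝ) < Cl := by linarith
  refine ⟨Cl * α ^ ν * (1 / (1 - q)) + Cl, by positivity, ?_⟩
  intro x r hr j _ hnot
  have hlampos : ∀ s : ℝ, 0 < s → 0 < lam x s := fun s hs => hpos x s hs
  set c : ℕ → ℝ := fun k => if k ≤ j then α ^ k * r else 2 * (α ^ j * r) with hc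
  have hck : ∀ k, k ≤ j → c k = α ^ k * r := by
    intro k hk; simp only [hc, if_pos hk]
  have hcj1 : c (j + 1) = 2 * (α ^ j * r) := by
    simp only [hc, if_neg (Nat.not_succ_le_self j)]
  have hcpos : ∀ k, 0 < c k := by
    intro k; by_cases h : k ≤ j <;> simp only [hc, h, if_true, if_false] <;> positivity
  set A : ℕ → Set X := fun k => ball x (c (k + 1)) \ ball x (c k) with hA
  -- measure decay from non-doubling
  have hdecay : ∀ m : ℕ, m ≤ j →
      μ (ball x (α ^ (j - m) * r)) ≤ ENNReal.ofReal (βα⁻¹ ^ m) * μ (ball x (α ^ j * r)) := by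
    intro m
    induction m with
    | zero => intro _; simp
    | succ m ih =>
        intro hmj
        have hmj' : m ≤ j := by omega
        have hlt : j - (m + 1) < j := by omega
        have hnd := hnot (j - (m + 1)) hlt
        simp only [IsDoubling, not_le] at hnd
        have harg : α * (α ^ (j - (m + 1)) * r) = α ^ (j - m) * r := by
          have h5 : j - (m + 1) + 1 = j - m := by omega
          rw [← h5, pow_succ]; ring
        rw [harg] at hnd
        have hβne : ENNReal.ofReal βα ≠ 0 := by
          simp only [ne_eq, ENNReal.ofReal_eq_zero, not_le]; linarith
        calc μ (ball x (α ^ (j - (m + 1)) * r))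
            = (ENNReal.ofReal βα)⁻¹ *
                (ENNReal.ofReal βα * μ (ball x (α ^ (j - (m + 1)) * r))) := by
              rw [← mul_assoc, ENNReal.inv_mul_cancel hβne ENNReal.ofReal_ne_top, one_mul]
          _ ≤ (ENNReal.ofReal βα)⁻¹ * μ (ball x (α ^ (j - m) * r)) :=
              mul_le_mul_right hnd.le _
          _ ≤ (ENNReal.ofReal βα)⁻¹ *
                (ENNReal.ofReal (βα⁻¹ ^ m) * μ (ball x (α ^ j * r))) :=
              mul_le_mul_right (ih hmj') _
          _ = ENNReal.ofReal (βα⁻¹ ^ (m + 1)) * μ (ball x (α ^ j * r)) := by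
              rw [← mul_assoc, ← ENNReal.ofReal_inv_of_pos hβpos,
                ← ENNReal.ofReal_mul (by positivity), ← pow_succ']
  set bnd : ℕ → ℝ := fun k => if k < j then Cl * α ^ ν * q ^ (j - 1 - k) else Cl with hbnd
  have hbnd_nonneg : ∀ k, 0 ≤ bnd k := by
    intro k; by_cases h : k < j <;> simp only [hbnd, h, if_true, if_false] <;> positivity
  -- the per-shell bound
  have key : ∀ k : Fin (j + 1),
      ∫⁻ y in A k.val, ENNReal.ofReal (1 / lam x (dist y x)) ∂μ
        ≤ ENNReal.ofReal (bnd k.val) := by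
    rintro ⟨kn, hknlt⟩
    have hkn : kn ≤ j := by omega
    have hckn : c kn = α ^ kn * r := hck kn hkn
    have hlk : 0 < lam x (α ^ kn * r) := hlampos _ (by positivity)
    simp only [Fin.val_mk]
    have hAm : MeasurableSet (A kn) := measurableSet_ball.diff measurableSet_ball
    have hstep1 : ∫⁻ y in A kn, ENNReal.ofReal (1 / lam x (dist y x)) ∂μ
        ≤ ENNReal.ofReal (1 / lam x (α ^ kn * r)) * μ (ball x (c (kn + 1))) := by
      calc ∫⁻ y in A kn, ENNReal.ofReal (1 / lam x (dist y x)) ∂μ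
          ≤ ∫⁻ _ in A kn, ENNReal.ofReal (1 / lam x (α ^ kn * r)) ∂μ := by
            apply setLIntegral_mono' hAm
            intro y hy
            apply ENNReal.ofReal_le_ofReal
            apply one_div_le_one_div_of_le hlk
            apply hmono x _ _ (by positivity)
            have h6 : y ∉ ball x (c kn) := hy.2
            rw [mem_ball, not_lt, hckn] at h6
            exact h6
        _ = ENNReal.ofReal (1 / lam x (α ^ kn * r)) * μ (A kn) :=
            setLIntegral_const _ _
        _ ≤ ENNReal.ofReal (1 / lam x (α ^ kn * r)) * μ (ball x (c (kn + 1))) :=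
            mul_le_mul_right (measure_mono Set.diff_subset) _
    rcases lt_or_eq_of_le hkn with hklt | hkeq
    · -- non-final shells
      set m := j - 1 - kn with hmdef
      have hm1 : j - m = kn + 1 := by omega
      have hm2 : j - kn = m + 1 := by omega
      have hmj : m ≤ j := by omega
      have hck1 : c (kn + 1) = α ^ (kn + 1) * r := hck (kn + 1) (by omega)
      have hlj : 0 < lam x (α ^ j * r) := hlampos _ (by positivity)
      have hdec : μ (ball x (α ^ (kn + 1) * r))
          ≤ ENNReal.ofReal (βα⁻¹ ^ m) * μ (ball x (α ^ j * r)) := by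
        have := hdecay m hmj
        rwa [hm1] at this
      have hscale : lam x (α ^ j * r) ≤ Cl * (α ^ ν) ^ (m + 1) * lam x (α ^ kn * r) := by
        have hs := lam_scale lam Cl hCl hpos hmono hdoub x (α ^ kn * r) (α ^ j * r)
          (by positivity)
          (by
            apply mul_le_mul_of_nonneg_right _ hr.le
            exact pow_le_pow_right₀ hα.le hkn)
        have ediv : (α ^ j * r) / (α ^ kn * r) = α ^ (j - kn) := by
          rw [pow_sub₀ α (ne_of_gt hα0) hkn]
          field_simp
        have epow : ((α : ℝ) ^ (j - kn)) ^ ν = (α ^ ν) ^ (j - kn) := by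
          rw [← Real.rpow_natCast α (j - kn), ← Real.rpow_mul hα0.le,
            ← Real.rpow_natCast (α ^ ν) (j - kn), ← Real.rpow_mul hα0.le,
            mul_comm (((j - kn : ℕ) : ℝ)) ν]
        rw [ediv, epow, hm2] at hs
        exact hs
      have hreal : 1 / lam x (α ^ kn * r) * (βα⁻¹ ^ m * lam x (α ^ j * r))
          ≤ Cl * α ^ ν * q ^ m := by
        have hstep : 1 / lam x (α ^ kn * r) * (βα⁻¹ ^ m * lam x (α ^ j * r))
            ≤ 1 / lam x (α ^ kn * r) *
              (βα⁻¹ ^ m * (Cl * (α ^ ν) ^ (m + 1) * lam x (α ^ kn * r))) := by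
          apply mul_le_mul_of_nonneg_left _ (by positivity)
          exact mul_le_mul_of_nonneg_left hscale (by positivity)
        have heq : 1 / lam x (α ^ kn * r) *
            (βα⁻¹ ^ m * (Cl * (α ^ ν) ^ (m + 1) * lam x (α ^ kn * r)))
            = Cl * α ^ ν * q ^ m := by
          rw [hqdef]
          field_simp
          ring
        linarith
      have hbk : bnd kn = Cl * α ^ ν * q ^ m := by
        simp only [hbnd, if_pos hklt, hmdef]
      rw [hbk]
      calc ∫⁻ y in A kn, ENNReal.ofReal (1 / lam x (dist y x)) ∂μ
          ≤ ENNReal.ofReal (1 / lam x (α ^ kn * r)) * μ (ball x (c (kn + 1))) := hstep1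
        _ ≤ ENNReal.ofReal (1 / lam x (α ^ kn * r)) *
              (ENNReal.ofReal (βα⁻¹ ^ m) * μ (ball x (α ^ j * r))) := by
            rw [hck1]; exact mul_le_mul_right hdec _
        _ ≤ ENNReal.ofReal (1 / lam x (α ^ kn * r)) *
              (ENNReal.ofReal (βα⁻¹ ^ m) * ENNReal.ofReal (lam x (α ^ j * r))) :=
            mul_le_mul_right (mul_le_mul_right (hmeas x _ (by positivity)) _) _
        _ = ENNReal.ofReal (1 / lam x (α ^ kn * r) * (βα⁻¹ ^ m * lam x (α ^ j * r))) := by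
            rw [← ENNReal.ofReal_mul (by positivity), ← ENNReal.ofReal_mul (by positivity)]
        _ ≤ ENNReal.ofReal (Cl * α ^ ν * q ^ m) := ENNReal.ofReal_le_ofReal hreal
    · -- final shell
      subst hkeq
      have hbk : bnd kn = Cl := by simp only [hbnd, if_neg (lt_irrefl kn)]
      rw [hbk]
      have hlj : 0 < lam x (α ^ kn * r) := hlk
      have hdb : lam x (2 * (α ^ kn * r)) ≤ Cl * lam x (α ^ kn * r) := by
        have := hdoub x (2 * (α ^ kn * r)) (by positivity)
        have he : 2 * (α ^ kn * r) / 2 = α ^ kn * r := by ring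
        rwa [he] at this
      calc ∫⁻ y in A kn, ENNReal.ofReal (1 / lam x (dist y x)) ∂μ
          ≤ ENNReal.ofReal (1 / lam x (α ^ kn * r)) * μ (ball x (c (kn + 1))) := hstep1
        _ ≤ ENNReal.ofReal (1 / lam x (α ^ kn * r)) *
              ENNReal.ofReal (lam x (2 * (α ^ kn * r))) := by
            rw [hcj1]
            exact mul_le_mul_right (hmeas x _ (by positivity)) _
        _ = ENNReal.ofReal (1 / lam x (α ^ kn * r) * lam x (2 * (α ^ kn * r))) := by
            rw [← ENNReal.ofReal_mul (by positivity)]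
        _ ≤ ENNReal.ofReal Cl := by
            apply ENNReal.ofReal_le_ofReal
            have : 1 / lam x (α ^ kn * r) * lam x (2 * (α ^ kn * r))
                ≤ 1 / lam x (α ^ kn * r) * (Cl * lam x (α ^ kn * r)) :=
              mul_le_mul_of_nonneg_left hdb (by positivity)
            have he : 1 / lam x (α ^ kn * r) * (Cl * lam x (α ^ kn * r)) = Cl := by
              field_simp
            linarith
  -- covering of the annulus by the shells
  have hcover : ball x (2 * (α ^ j * r)) \ ball x r ⊆ ⋃ k : Fin (j + 1), A k.val := by
    intro y hy
    obtain ⟨hy1, hy2⟩ := hy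
    rw [mem_ball] at hy1
    have hd : r ≤ dist y x := by
      by_contra h
      exact hy2 (mem_ball.2 (by linarith))
    set P : ℕ → Prop := fun k => α ^ k * r ≤ dist y x with hP
    set k := Nat.findGreatest P j with hkdef
    have hP0 : P 0 := by simpa [hP] using hd
    have hk0 : P k := Nat.findGreatest_spec (Nat.zero_le j) hP0
    have hkj : k ≤ j := Nat.findGreatest_le j
    refine mem_iUnion.2 ⟨⟨k, by omega⟩, ?_, ?_⟩
    · rw [mem_ball]
      simp only [Fin.val_mk]
      rcases lt_or_eq_of_le hkj with hklt | hkeq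
      · have hkk1 : k + 1 ≤ j := hklt
        have hng : ¬ P (k + 1) :=
          Nat.findGreatest_is_greatest (Nat.lt_succ_self k) hkk1
        rw [hck (k + 1) hkk1]
        simpa [hP, not_le] using hng
      · rw [hkeq, hcj1]
        exact hy1
    · rw [mem_ball, not_lt]
      simp only [Fin.val_mk]
      rw [hck k hkj]
      exact hk0
  -- summing up
  have hsum : ∑ k : Fin (j + 1), bnd k.val ≤ Cl * α ^ ν * (1 / (1 - q)) + Cl := by
    rw [Fin.sum_univ_eq_sum_range bnd (j + 1), Finset.sum_range_succ]
    have hbj : bnd j = Cl := by simp only [hbnd, if_neg (lt_irrefl j)]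
    have hsplit : ∑ k ∈ Finset.range j, bnd k
        = Cl * α ^ ν * ∑ k ∈ Finset.range j, q ^ (j - 1 - k) := by
      rw [Finset.mul_sum]
      apply Finset.sum_congr rfl
      intro k hk
      rw [Finset.mem_range] at hk
      simp only [hbnd, if_pos hk]
    have hgeom : ∑ k ∈ Finset.range j, q ^ (j - 1 - k) ≤ 1 / (1 - q) := by
      rw [Finset.sum_range_reflect (fun i => q ^ i) j, geom_sum_eq (ne_of_lt hqlt) j]
      rw [show q ^ j - 1 = -(1 - q ^ j) by ring, show q - 1 = -(1 - q) by ring,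
        neg_div_neg_eq]
      rw [div_le_div_iff₀ h1q h1q]
      have := pow_nonneg hq0 j
      nlinarith
    rw [hsplit, hbj]
    have : Cl * α ^ ν * ∑ k ∈ Finset.range j, q ^ (j - 1 - k)
        ≤ Cl * α ^ ν * (1 / (1 - q)) :=
      mul_le_mul_of_nonneg_left hgeom (by positivity)
    linarith
  calc ballδ μ lam x r x (α ^ j * r)
      ≤ ∫⁻ y in ⋃ k : Fin (j + 1), A k.val,
          ENNReal.ofReal (1 / lam x (dist y x)) ∂μ :=
        lintegral_mono_set hcover
    _ ≤ ∑' k : Fin (j + 1), ∫⁻ y in A k.val,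
          ENNReal.ofReal (1 / lam x (dist y x)) ∂μ :=
        lintegral_iUnion_le _ _
    _ ≤ ∑' k : Fin (j + 1), ENNReal.ofReal (bnd k.val) := ENNReal.tsum_le_tsum key
    _ = ∑ k : Fin (j + 1), ENNReal.ofReal (bnd k.val) := tsum_fintype _
    _ = ENNReal.ofReal (∑ k : Fin (j + 1), bnd k.val) :=
        (ENNReal.ofReal_sum_of_nonneg (fun i _ => hbnd_nonneg i.val)).symm
    _ ≤ ENNReal.ofReal (Cl * α ^ ν * (1 / (1 - q)) + Cl) :=
        ENNReal.ofReal_le_ofReal hsum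

end
end

section
/- Let (X,d,μ) be an upper doubling metric measure space. Then there exists a positive constant c such that for all balls B ⊂ R ⊂ S in X, δ(B,S) ≤ δ(B,R) + c δ(R,S); moreover, if B and R are concentric, then δ(B,S) ≤ δ(B,R) + δ(R,S). -/
open MeasureTheory Metric Set
open scoped ENNReal NNReal BigOperators

noncomputable section

variable {X : Type*} [MetricSpace X] [MeasurableSpace X] [BorelSpace X]

theorem delta_triangle
    (μ : Measure X) (lam : X → ℝ → ℝ) (Cl : ℝ)
    (hud : UpperDoubling μ lam Cl) (hdc : DomCompat lam Cl) :
    ∃ c : ℝ, 0 < c ∧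
      ∀ (xB xR xS : X) (rB rR rS : ℝ), 0 < rB → 0 < rR → 0 < rS →
        ball xB rB ⊆ ball xR rR → ball xR rR ⊆ ball xS rS →
        (ballδ μ lam xB rB xS rS ≤
          ballδ μ lam xB rB xR rR + ENNReal.ofReal c * ballδ μ lam xR rR xS rS) ∧
        (xB = xR →
          ballδ μ lam xB rB xS rS ≤
            ballδ μ lam xB rB xR rR + ballδ μ lam xR rR xS rS) := by
  obtain ⟨hCl, hpos, hmono, _hvol, hdoub⟩ := hud
  have hCl0 : (0:ℝ) < Cl := lt_trans one_pos hCl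
  refine ⟨Cl ^ 2, by positivity, ?_⟩
  intro xB xR xS rB rR rS hrB hrR hrS hBR hRS
  have hxBR : dist xB xR < rR := hBR (mem_ball_self hrB)
  have key : ∀ (xB' : X) (C : ℝ), 0 ≤ C → dist xB' xR < rR →
      (∀ x ∈ ball xS (2*rS) \ ball xR (2*rR),
        ENNReal.ofReal (1 / lam xB' (dist x xB')) ≤
          ENNReal.ofReal C * ENNReal.ofReal (1 / lam xR (dist x xR))) →
      ballδ μ lam xB' rB xS rS ≤
        ballδ μ lam xB' rB xR rR + ENNReal.ofReal C * ballδ μ lam xR rR xS rS := by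
    intro xB' C hC _hd hptw
    unfold ballδ
    have hsub : ball xS (2*rS) \ ball xB' rB ⊆
        (ball xR (2*rR) \ ball xB' rB) ∪ (ball xS (2*rS) \ ball xR (2*rR)) := by
      intro x hx
      by_cases h : x ∈ ball xR (2*rR)
      · exact Or.inl ⟨h, hx.2⟩
      · exact Or.inr ⟨hx.1, h⟩
    have hsub2 : ball xS (2*rS) \ ball xR (2*rR) ⊆ ball xS (2*rS) \ ball xR rR :=
      diff_subset_diff_right (ball_subset_ball (by linarith))
    calc ∫⁻ x in ball xS (2*rS) \ ball xB' rB, ENNReal.ofReal (1 / lam xB' (dist x xB')) ∂μ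
        ≤ ∫⁻ x in (ball xR (2*rR) \ ball xB' rB) ∪ (ball xS (2*rS) \ ball xR (2*rR)),
            ENNReal.ofReal (1 / lam xB' (dist x xB')) ∂μ := lintegral_mono_set hsub
      _ ≤ (∫⁻ x in ball xR (2*rR) \ ball xB' rB, ENNReal.ofReal (1 / lam xB' (dist x xB')) ∂μ)
          + ∫⁻ x in ball xS (2*rS) \ ball xR (2*rR),
              ENNReal.ofReal (1 / lam xB' (dist x xB')) ∂μ := lintegral_union_le _ _ _
      _ ≤ (∫⁻ x in ball xR (2*rR) \ ball xB' rB, ENNReal.ofReal (1 / lam xB' (dist x xB')) ∂μ)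
          + ∫⁻ x in ball xS (2*rS) \ ball xR (2*rR),
              ENNReal.ofReal C * ENNReal.ofReal (1 / lam xR (dist x xR)) ∂μ := by
            refine add_le_add le_rfl ?_
            exact setLIntegral_mono'
              ((measurableSet_ball).diff (measurableSet_ball)) hptw
      _ = (∫⁻ x in ball xR (2*rR) \ ball xB' rB, ENNReal.ofReal (1 / lam xB' (dist x xB')) ∂μ)
          + ENNReal.ofReal C * ∫⁻ x in ball xS (2*rS) \ ball xR (2*rR),
              ENNReal.ofReal (1 / lam xR (dist x xR)) ∂μ := by
            rw [lintegral_const_mul' _ _ ENNReal.ofReal_ne_top]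
      _ ≤ _ := by
            gcongr
  constructor
  · refine key xB (Cl ^ 2) (by positivity) hxBR ?_
    rintro x ⟨_hxS, hxR⟩
    have hdR : 2 * rR ≤ dist x xR := by
      simpa [mem_ball, not_lt] using hxR
    have hdB : dist x xR / 2 ≤ dist x xB := by
      have h1 : dist x xR ≤ dist x xB + dist xB xR := dist_triangle x xB xR
      have h2 : rR ≤ dist x xR / 2 := by linarith
      linarith
    have hdB0 : 0 < dist x xB := lt_of_lt_of_le (by linarith) hdB
    have hdR0 : 0 < dist x xR := by linarith
    have laB : 0 < lam xB (dist x xB) := hpos _ _ hdB0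
    have laR : 0 < lam xR (dist x xR) := hpos _ _ hdR0
    have hchain : lam xR (dist x xR) ≤ Cl ^ 2 * lam xB (dist x xB) := by
      have h1 : lam xR (dist x xR) ≤ Cl * lam xR (dist x xR / 2) := hdoub _ _ hdR0
      have h2 : lam xR (dist x xR / 2) ≤ lam xR (dist x xB) :=
        hmono _ _ _ (by linarith) hdB
      have h3 : lam xR (dist x xB) ≤ Cl * lam xB (dist x xB) := by
        refine hdc xR xB _ hdB0 ?_
        rw [dist_comm]
        calc dist xB xR ≤ rR := le_of_lt hxBR
          _ ≤ dist x xR / 2 := by linarith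
          _ ≤ dist x xB := hdB
      nlinarith
    rw [← ENNReal.ofReal_mul (by positivity)]
    refine ENNReal.ofReal_le_ofReal ?_
    rw [mul_one_div, div_le_div_iff₀ laB laR]
    nlinarith
  · intro hBReq
    subst hBReq
    have := key xB 1 zero_le_one hxBR (by
      intro x _
      simp)
    simpa using this

end
end

section
/- Let (X,d,μ) be an upper doubling metric measure space. Then there exists a positive constant c̃ such that for all balls B ⊂ R ⊂ S in X, δ(R,S) ≤ c̃ (1 + δ(B,S)); moreover, if B and R are concentric, then δ(R,S) ≤ δ(B,S). -/
open MeasureTheory Metric Set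
open scoped ENNReal NNReal BigOperators

noncomputable section

variable {X : Type*} [MetricSpace X] [MeasurableSpace X] [BorelSpace X]

theorem delta_shrink
    (μ : Measure X) (lam : X → ℝ → ℝ) (Cl : ℝ)
    (hud : UpperDoubling μ lam Cl) (hdc : DomCompat lam Cl) :
    ∃ c : ℝ, 0 < c ∧
      ∀ (xB xR xS : X) (rB rR rS : ℝ), 0 < rB → 0 < rR → 0 < rS →
        ball xB rB ⊆ ball xR rR → ball xR rR ⊆ ball xS rS →
        (ballδ μ lam xR rR xS rS ≤
          ENNReal.ofReal c * (1 + ballδ μ lam xB rB xS rS)) ∧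
        (xB = xR → ballδ μ lam xR rR xS rS ≤ ballδ μ lam xB rB xS rS) := by
  obtain ⟨hCl, hpos, hmono, hmeasb, hhalf⟩ := hud
  have hCl0 : (0:ℝ) < Cl := lt_trans one_pos hCl
  refine ⟨Cl^2, by positivity, ?_⟩
  intro xB xR xS rB rR rS hrB hrR hrS hBR hRS
  constructor
  · have key : ballδ μ lam xR rR xS rS ≤
        ENNReal.ofReal (Cl^2) * ballδ μ lam xB rB xS rS := by
      unfold ballδ
      have hmB : MeasurableSet (ball xS (2*rS) \ ball xB rB) :=
        measurableSet_ball.diff measurableSet_ball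
      have hmR : MeasurableSet (ball xS (2*rS) \ ball xR rR) :=
        measurableSet_ball.diff measurableSet_ball
      rw [← lintegral_indicator hmR, ← lintegral_indicator hmB,
        ← lintegral_const_mul' _ _ ENNReal.ofReal_ne_top]
      refine lintegral_mono fun x => ?_
      by_cases hx : x ∈ ball xS (2*rS) \ ball xR rR
      · have hxB : x ∈ ball xS (2*rS) \ ball xB rB := ⟨hx.1, fun h => hx.2 (hBR h)⟩
        rw [Set.indicator_of_mem hx, Set.indicator_of_mem hxB,
          ← ENNReal.ofReal_mul (by positivity)]
        apply ENNReal.ofReal_le_ofReal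
        have hd : rR ≤ dist x xR := by simpa [mem_ball, not_lt] using hx.2
        have hdB : rB ≤ dist x xB := by simpa [mem_ball, not_lt] using hxB.2
        have hBRd : dist xB xR < rR := by
          have := hBR (mem_ball_self hrB); simpa [mem_ball] using this
        have h2 : dist x xB ≤ 2 * dist x xR := by
          have ht := dist_triangle x xR xB
          have hc : dist xR xB = dist xB xR := dist_comm _ _
          linarith
        have hdpos : 0 < dist x xR := lt_of_lt_of_le hrR hd
        have hdBpos : 0 < dist x xB := lt_of_lt_of_le hrB hdB
        have h1 := hmono xB (dist x xB) (2 * dist x xR) hdBpos h2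
        have h2' := hhalf xB (2 * dist x xR) (by positivity)
        rw [show (2 * dist x xR) / 2 = dist x xR by ring] at h2'
        have h3 := hdc xB xR (dist x xR) hdpos (le_trans hBRd.le hd)
        have hLR : 0 < lam xR (dist x xR) := hpos _ _ hdpos
        have hLB : 0 < lam xB (dist x xB) := hpos _ _ hdBpos
        rw [mul_one_div, div_le_div_iff₀ hLR hLB]
        have h3' := mul_le_mul_of_nonneg_left h3 hCl0.le
        nlinarith
      · rw [Set.indicator_of_notMem hx]; exact zero_le
    calc ballδ μ lam xR rR xS rS ≤ ENNReal.ofReal (Cl^2) * ballδ μ lam xB rB xS rS := key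
      _ ≤ ENNReal.ofReal (Cl^2) * (1 + ballδ μ lam xB rB xS rS) :=
          mul_le_mul_right le_add_self _
  · intro h
    subst h
    exact lintegral_mono_set (Set.diff_subset_diff_right hBR)


end
end

section
/- Let (X,d,μ) be an upper doubling metric measure space, and let α ∈ (1,∞) and β > C_λ^{log₂ α}. Then for every ball B ⊂ X there exists j ∈ ℤ≥0 such that α^j B is (α,β)-doubling. -/
open MeasureTheory Metric Set
open scoped ENNReal NNReal BigOperators

noncomputable section

variable {X : Type*} [MetricSpace X] [MeasurableSpace X] [BorelSpace X]

theorem exists_doubling_ball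
    (μ : Measure X) (lam : X → ℝ → ℝ) (Cl : ℝ)
    (hud : UpperDoubling μ lam Cl) (hdc : DomCompat lam Cl)
    (α β : ℝ) (hα : 1 < α) (hβ : Cl ^ Real.logb 2 α < β) :
    ∀ (x : X) (r : ℝ), 0 < r → ∃ j : ℕ, IsDoubling μ α β x (α ^ j * r) := by
  obtain ⟨hCl, hpos, hmono, hball, hdbl⟩ := hud
  intro x r hr
  by_contra hcon
  push_neg at hcon
  simp only [IsDoubling, not_le] at hcon
  set t : ℝ := Real.logb 2 α with ht
  have hCl0 : (0:ℝ) < Cl := lt_trans one_pos hCl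
  have ht0 : 0 < t := Real.logb_pos one_lt_two (by linarith)
  set q : ℝ := Cl ^ t with hq
  have hq1 : 1 < q := by
    rw [hq, Real.one_lt_rpow_iff_of_pos hCl0]
    exact Or.inl ⟨hCl, ht0⟩
  have hq0 : 0 < q := lt_trans one_pos hq1
  have hβ1 : 1 < β := lt_trans hq1 hβ
  have hβ0 : (0:ℝ) < β := lt_trans one_pos hβ1
  have hα0 : (0:ℝ) < α := lt_trans one_pos hα
  -- rewrite hcon in terms of m j := μ (ball x (α^j * r))
  have hcon' : ∀ j : ℕ, ENNReal.ofReal β * μ (ball x (α ^ j * r))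
      < μ (ball x (α ^ (j+1) * r)) := by
    intro j
    have := hcon j
    have heq : α * (α ^ j * r) = α ^ (j+1) * r := by ring
    rwa [heq] at this
  -- doubling of lam
  have lamdbl : ∀ (k : ℕ) (s : ℝ), 0 < s → lam x (2 ^ k * s) ≤ Cl ^ k * lam x s := by
    intro k
    induction k with
    | zero => intro s hs; simp
    | succ k ih =>
      intro s hs
      have h2 : (0:ℝ) < 2 ^ k * s := by positivity
      have h1 : lam x (2 * (2 ^ k * s)) ≤ Cl * lam x (2 ^ k * s) := by
        have := hdbl x (2 * (2 ^ k * s)) (by positivity)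
        rwa [mul_div_cancel_left₀ _ (two_ne_zero)] at this
      have heq : (2:ℝ) ^ (k+1) * s = 2 * (2 ^ k * s) := by ring
      rw [heq]
      calc lam x (2 * (2 ^ k * s)) ≤ Cl * lam x (2 ^ k * s) := h1
        _ ≤ Cl * (Cl ^ k * lam x s) := by
            exact mul_le_mul_of_nonneg_left (ih s hs) (le_of_lt hCl0)
        _ = Cl ^ (k+1) * lam x s := by ring
  set L : ℝ := lam x (α * r) with hL
  have hL0 : 0 < L := hpos x (α * r) (by positivity)
  -- key growth estimate
  have key : ∀ j : ℕ, lam x (α ^ (j+1) * r) ≤ Cl * q ^ j * L := by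
    intro j
    set k : ℕ := ⌈(j : ℝ) * t⌉₊ with hk
    have hjt0 : (0:ℝ) ≤ (j : ℝ) * t := by positivity
    have hα2 : α = (2:ℝ) ^ t := (Real.rpow_logb two_pos (by norm_num) hα0).symm
    have step1 : α ^ j ≤ (2:ℝ) ^ k := by
      have : α ^ j = (2:ℝ) ^ ((j : ℝ) * t) := by
        rw [hα2, ← Real.rpow_natCast ((2:ℝ) ^ t) j, ← Real.rpow_mul (by norm_num)]
        ring_nf
      rw [this, ← Real.rpow_natCast 2 k]
      exact Real.rpow_le_rpow_of_exponent_le one_le_two (Nat.le_ceil _)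
    have step2 : lam x (α ^ (j+1) * r) ≤ lam x ((2:ℝ) ^ k * (α * r)) := by
      apply hmono x _ _ (by positivity)
      have : α ^ (j+1) * r = α ^ j * (α * r) := by ring
      rw [this]
      exact mul_le_mul_of_nonneg_right step1 (by positivity)
    have step3 : lam x ((2:ℝ) ^ k * (α * r)) ≤ Cl ^ k * L :=
      lamdbl k (α * r) (by positivity)
    have step4 : Cl ^ k ≤ Cl * q ^ j := by
      have h1 : (Cl:ℝ) ^ k = Cl ^ ((k : ℕ) : ℝ) := (Real.rpow_natCast Cl k).symm
      have h2 : ((k : ℕ) : ℝ) ≤ (j : ℝ) * t + 1 := le_of_lt (Nat.ceil_lt_add_one hjt0)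
      have h3 : Cl ^ ((k : ℕ) : ℝ) ≤ Cl ^ ((j : ℝ) * t + 1) :=
        Real.rpow_le_rpow_of_exponent_le (le_of_lt hCl) h2
      have h4 : Cl ^ ((j : ℝ) * t + 1) = Cl * q ^ j := by
        rw [Real.rpow_add hCl0, Real.rpow_one, mul_comm ((j:ℝ)) t,
          Real.rpow_mul (le_of_lt hCl0), Real.rpow_natCast]
        ring
      rw [h1]; rw [h4] at h3; exact h3
    calc lam x (α ^ (j+1) * r) ≤ Cl ^ k * L := le_trans step2 step3
      _ ≤ Cl * q ^ j * L := mul_le_mul_of_nonneg_right step4 (le_of_lt hL0)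
  -- the measure grows at least like β^j
  have growth : ∀ j : ℕ, ENNReal.ofReal β ^ j * μ (ball x (α ^ 1 * r))
      ≤ μ (ball x (α ^ (j+1) * r)) := by
    intro j
    induction j with
    | zero => simp
    | succ j ih =>
      calc ENNReal.ofReal β ^ (j+1) * μ (ball x (α ^ 1 * r))
          = ENNReal.ofReal β * (ENNReal.ofReal β ^ j * μ (ball x (α ^ 1 * r))) := by ring
        _ ≤ ENNReal.ofReal β * μ (ball x (α ^ (j+1) * r)) :=
            mul_le_mul_right ih _
        _ ≤ μ (ball x (α ^ (j+2) * r)) := le_of_lt (hcon' (j+1))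
  set m1 : ℝ≥0∞ := μ (ball x (α ^ 1 * r)) with hm1
  have m1pos : 0 < m1 := lt_of_le_of_lt zero_le (hcon' 0)
  have m1fin : m1 < ⊤ := by
    have h := hball x (α ^ 1 * r) (by positivity)
    exact lt_of_le_of_lt h ENNReal.ofReal_lt_top
  set c : ℝ := m1.toReal with hc
  have hc0 : 0 < c := ENNReal.toReal_pos m1pos.ne' m1fin.ne
  -- real form of the inequality
  have final : ∀ j : ℕ, β ^ j * c ≤ Cl * q ^ j * L := by
    intro j
    have h1 : ENNReal.ofReal (β ^ j * c) ≤ ENNReal.ofReal (Cl * q ^ j * L) := by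
      rw [ENNReal.ofReal_mul (by positivity), ENNReal.ofReal_pow (le_of_lt hβ0)]
      have hce : ENNReal.ofReal c = m1 := ENNReal.ofReal_toReal m1fin.ne
      rw [hce]
      calc ENNReal.ofReal β ^ j * m1 ≤ μ (ball x (α ^ (j+1) * r)) := growth j
        _ ≤ ENNReal.ofReal (lam x (α ^ (j+1) * r)) :=
            hball x (α ^ (j+1) * r) (by positivity)
        _ ≤ ENNReal.ofReal (Cl * q ^ j * L) := ENNReal.ofReal_le_ofReal (key j)
    exact (ENNReal.ofReal_le_ofReal_iff (by positivity)).mp h1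
  -- contradiction via unboundedness of (β/q)^j
  obtain ⟨n, hn⟩ := pow_unbounded_of_one_lt (Cl * L / c) ((one_lt_div hq0).mpr hβ)
  have hqn : (0:ℝ) < q ^ n := pow_pos hq0 n
  rw [div_pow, div_lt_div_iff₀ hc0 hqn] at hn
  have := final n
  nlinarith [hn, this]

end
end

section
/- Let (X,d) be a geometrically doubling metric space with n := log₂ N₀, let μ be a Borel measure on X, and let α ∈ (1,∞) and β > α^n. Then for μ-almost every x ∈ X the following holds: for every r > 0 and every ε > 0 there exists j ∈ ℕ with α^{-j} r < ε such that the ball B(x, α^{-j} r) is (α,β)-doubling; that is, there exist (α,β)-doubling balls of the form B(x, α^{-j} r) with arbitrarily small radius. -/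
open MeasureTheory Metric Set
open scoped ENNReal NNReal BigOperators

noncomputable section

variable {X : Type*} [MetricSpace X] [MeasurableSpace X] [BorelSpace X]

open Classical in
private lemma cover_iter {N0 : ℕ} (hgd : GeomDoubling (X := X) N0) (j : ℕ) (c : X) (ρ : ℝ)
    (hρ : 0 < ρ) :
    ∃ t : Finset X, t.card ≤ N0 ^ j ∧ ball c ρ ⊆ ⋃ y ∈ t, ball y (ρ / 2 ^ j) := by
  induction j with
  | zero => exact ⟨{c}, by simp, by simp⟩
  | succ j ih =>
    obtain ⟨t, hcard, hcov⟩ := ih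
    have hρ' : 0 < ρ / 2 ^ j := by positivity
    choose f hf1 hf2 using fun y : X => hgd y (ρ / 2 ^ j) hρ'
    refine ⟨t.biUnion f, ?_, ?_⟩
    · calc (t.biUnion f).card ≤ ∑ y ∈ t, (f y).card := Finset.card_biUnion_le
        _ ≤ ∑ _y ∈ t, N0 := Finset.sum_le_sum fun y _ => hf1 y
        _ = t.card * N0 := by simp [Finset.sum_const, mul_comm]
        _ ≤ N0 ^ j * N0 := Nat.mul_le_mul_right _ hcard
        _ = N0 ^ (j + 1) := by ring
    · intro x hx
      obtain ⟨y, hy, hxy⟩ : ∃ y ∈ t, x ∈ ball y (ρ / 2 ^ j) := by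
        simpa using hcov hx
      obtain ⟨z, hz, hxz⟩ : ∃ z ∈ f y, x ∈ ball z (ρ / 2 ^ j / 2) := by
        simpa using hf2 y hxy
      have : ρ / 2 ^ j / 2 = ρ / 2 ^ (j + 1) := by ring
      rw [this] at hxz
      exact Set.mem_biUnion (Finset.mem_biUnion.mpr ⟨y, hy, hz⟩) hxz

private lemma decay_aux (μ : Measure X) (α β : ℝ) (hα : 1 < α) (hβ : 1 < β) (x : X) (s : ℝ)
    (hnd : ∀ k : ℕ, ¬ IsDoubling μ α β x ((α ^ k)⁻¹ * s)) :
    ∀ k : ℕ, μ (ball x ((α ^ k)⁻¹ * s)) ≤ ((ENNReal.ofReal β)⁻¹) ^ k * μ (ball x s) := by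
  have hβ0 : (0:ℝ) < β := lt_trans one_pos hβ
  have hb0 : ENNReal.ofReal β ≠ 0 := by simp [ENNReal.ofReal_eq_zero, not_le, hβ0]
  have hbt : ENNReal.ofReal β ≠ ⊤ := ENNReal.ofReal_ne_top
  have hα0 : (0:ℝ) < α := lt_trans one_pos hα
  intro k
  induction k with
  | zero => simp
  | succ k ih =>
    have h := hnd (k + 1)
    rw [IsDoubling, not_le] at h
    have hrad : α * ((α ^ (k + 1))⁻¹ * s) = (α ^ k)⁻¹ * s := by
      rw [pow_succ]
      field_simp
    rw [hrad] at h
    have h2 : μ (ball x ((α ^ (k + 1))⁻¹ * s)) ≤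
        (ENNReal.ofReal β)⁻¹ * μ (ball x ((α ^ k)⁻¹ * s)) := by
      calc μ (ball x ((α ^ (k + 1))⁻¹ * s))
          = (ENNReal.ofReal β)⁻¹ * (ENNReal.ofReal β * μ (ball x ((α ^ (k + 1))⁻¹ * s))) := by
            rw [← mul_assoc, ENNReal.inv_mul_cancel hb0 hbt, one_mul]
        _ ≤ (ENNReal.ofReal β)⁻¹ * μ (ball x ((α ^ k)⁻¹ * s)) :=
            mul_le_mul_right h.le _
    calc μ (ball x ((α ^ (k + 1))⁻¹ * s))
        ≤ (ENNReal.ofReal β)⁻¹ * μ (ball x ((α ^ k)⁻¹ * s)) := h2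
      _ ≤ (ENNReal.ofReal β)⁻¹ * (((ENNReal.ofReal β)⁻¹) ^ k * μ (ball x s)) :=
          mul_le_mul_right ih _
      _ = ((ENNReal.ofReal β)⁻¹) ^ (k + 1) * μ (ball x s) := by ring

set_option maxHeartbeats 1000000 in
theorem exists_small_doubling_balls_ae
    (μ : Measure X) (N0 : ℕ) (hgd : GeomDoubling (X := X) N0)
    (α β : ℝ) (hα : 1 < α) (hβ : (α : ℝ) ^ Real.logb 2 N0 < β) :
    ∀ᵐ x ∂μ, ∀ r : ℝ, 0 < r → ∀ ε : ℝ, 0 < ε →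
      ∃ j : ℕ, (α ^ j)⁻¹ * r < ε ∧ IsDoubling μ α β x ((α ^ j)⁻¹ * r) := by
  rcases isEmpty_or_nonempty X with hX | hX
  · exact Filter.Eventually.of_forall fun x => (IsEmpty.false x).elim
  obtain ⟨x0⟩ := hX
  have hα0 : (0:ℝ) < α := lt_trans one_pos hα
  -- N0 ≥ 1
  have hN1 : 1 ≤ N0 := by
    by_contra h
    push_neg at h
    obtain ⟨t, hcard, hcov⟩ := hgd x0 1 one_pos
    have ht : t = ∅ := Finset.card_eq_zero.mp (Nat.le_zero.mp (hcard.trans (by omega)))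
    have := hcov (mem_ball_self one_pos)
    simp [ht] at this
  set n : ℝ := Real.logb 2 N0 with hn
  have hn0 : 0 ≤ n := Real.logb_nonneg one_lt_two (by exact_mod_cast hN1)
  have hαn1 : (1:ℝ) ≤ α ^ n := Real.one_le_rpow hα.le hn0
  have hβ1 : 1 < β := lt_of_le_of_lt hαn1 hβ
  have hβ0 : (0:ℝ) < β := lt_trans one_pos hβ1
  -- the bad set
  set Bad : Set X := {x | ∃ s : ℝ, 0 < s ∧ ∀ k : ℕ, ¬ IsDoubling μ α β x ((α ^ k)⁻¹ * s)}
    with hBadDef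
  -- stratification
  set E : ℕ → ℕ → ℕ → Set X := fun m M R =>
    {x | dist x x0 < (R:ℝ) + 1 ∧ ∃ s : ℝ, ((α ^ (m+1) : ℝ))⁻¹ ≤ s ∧ μ (ball x s) ≤ M ∧
      ∀ k : ℕ, ¬ IsDoubling μ α β x ((α ^ k)⁻¹ * s)} with hEdef
  have hBadSub : Bad ⊆ ⋃ (m : ℕ) (M : ℕ) (R : ℕ), E m M R := by
    rintro x ⟨s, hs, hnd⟩
    obtain ⟨m, hm⟩ : ∃ m : ℕ, s⁻¹ < α ^ (m+1) := by
      obtain ⟨m, hm⟩ := pow_unbounded_of_one_lt (s⁻¹) hα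
      exact ⟨m, lt_of_lt_of_le hm (pow_le_pow_right₀ hα.le (Nat.le_succ m))⟩
    have hms : ((α ^ (m+1) : ℝ))⁻¹ ≤ s := by
      rw [inv_le_comm₀ (by positivity) hs]
      exact hm.le
    have hfin : μ (ball x s) ≠ ⊤ := by
      intro htop
      apply hnd 0
      rw [IsDoubling]
      simp only [pow_zero, inv_one, one_mul]
      rw [htop, ENNReal.mul_top (by simp [ENNReal.ofReal_eq_zero, not_le, hβ0])]
      exact le_top
    obtain ⟨M, hM⟩ := ENNReal.exists_nat_gt hfin
    obtain ⟨R, hR⟩ := exists_nat_gt (dist x x0)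
    refine Set.mem_iUnion.mpr ⟨m, Set.mem_iUnion.mpr ⟨M, Set.mem_iUnion.mpr ⟨R, ?_⟩⟩⟩
    exact ⟨lt_trans hR (by linarith), s, hms, hM.le, hnd⟩
  -- each stratum is null
  have hEnull : ∀ m M R : ℕ, μ (E m M R) = 0 := by
    intro m M R
    set R' : ℝ := (R:ℝ) + 1 with hR'
    have hR'1 : (1:ℝ) ≤ R' := by
      have : (0:ℝ) ≤ (R:ℝ) := Nat.cast_nonneg R
      simp only [hR']
      linarith
    have hR'0 : (0:ℝ) < R' := lt_of_lt_of_le one_pos hR'1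
    set C1 : ℝ := 4 * R' * α ^ (m+1) with hC1
    have hC1_1 : (1:ℝ) ≤ C1 := by
      have h1 : (1:ℝ) ≤ α ^ (m+1) := one_le_pow₀ hα.le
      nlinarith
    set q : ℝ := α ^ n * β⁻¹ with hq
    have hq0 : 0 ≤ q := by positivity
    have hq1 : q < 1 := by
      rw [hq, mul_inv_lt_iff₀ hβ0, one_mul]
      exact hβ
    set c : ℝ := C1 ^ n * M with hc
    have hc0 : 0 ≤ c := by positivity
    -- per-k bound
    have hk : ∀ k : ℕ, μ (E m M R) ≤ ENNReal.ofReal (c * q ^ k) := by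
      intro k
      -- choose j
      have hex : ∃ j : ℕ, R' / 2 ^ j ≤ ((α ^ (k+m+1) : ℝ))⁻¹ / 2 := by
        obtain ⟨j, hj⟩ := pow_unbounded_of_one_lt (2 * R' * α ^ (k+m+1)) one_lt_two
        refine ⟨j, ?_⟩
        rw [div_le_div_iff₀ (by positivity) (by norm_num)]
        rw [inv_mul_eq_div, le_div_iff₀ (by positivity)]
        nlinarith [hj.le]
      obtain ⟨j, hj1, hj2⟩ : ∃ j : ℕ, R' / 2 ^ j ≤ ((α ^ (k+m+1) : ℝ))⁻¹ / 2 ∧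
          (2:ℝ) ^ j ≤ C1 * α ^ k := by
        refine ⟨Nat.find hex, Nat.find_spec hex, ?_⟩
        cases hfind : Nat.find hex with
        | zero =>
          rw [pow_zero]
          have : (1:ℝ) ≤ α ^ k := one_le_pow₀ hα.le
          nlinarith
        | succ j' =>
          have hmin := Nat.find_min hex (show j' < Nat.find hex by omega)
          rw [not_le] at hmin
          have h1 : ((α ^ (k+m+1) : ℝ))⁻¹ / 2 < R' / 2 ^ j' := hmin
          have h2 : (2:ℝ) ^ j' < 2 * R' * α ^ (k+m+1) := by
            rw [div_lt_div_iff₀ (by positivity) (by positivity)] at h1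
            rw [inv_mul_eq_div, div_lt_iff₀ (by positivity)] at h1
            nlinarith
          have h3 : α ^ (k+m+1) = α ^ (m+1) * α ^ k := by rw [← pow_add]; ring_nf
          rw [pow_succ]
          rw [h3] at h2
          nlinarith [pow_pos hα0 k, pow_pos hα0 (m+1)]
      set ρ : ℝ := R' / 2 ^ j with hρdef
      have hρ0 : 0 < ρ := by positivity
      obtain ⟨t, hcard, hcov⟩ := cover_iter hgd j x0 R' hR'0
      -- per ball bound
      have hball : ∀ y : X, μ (ball y ρ ∩ E m M R) ≤
          ((ENNReal.ofReal β)⁻¹) ^ k * (M : ℝ≥0∞) := by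
        intro y
        by_cases hne : (ball y ρ ∩ E m M R).Nonempty
        · obtain ⟨x, hx1, hx2⟩ := hne
          obtain ⟨-, s, hs1, hsM, hnd⟩ := hx2
          have hs0 : 0 < s := lt_of_lt_of_le (by positivity) hs1
          have hsub1 : ball y ρ ⊆ ball x ((α ^ k)⁻¹ * s) := by
            intro z hz
            rw [mem_ball] at hz hx1 ⊢
            have hd : dist z x < 2 * ρ := by
              have h1 : dist z x ≤ dist z y + dist y x := dist_triangle z y x
              have h2 : dist y x < ρ := by rw [dist_comm]; exact hx1
              linarith
            have h2ρ : 2 * ρ ≤ (α ^ k)⁻¹ * s := by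
              have e1 : 2 * ρ ≤ ((α ^ (k+m+1) : ℝ))⁻¹ := by linarith [hj1]
              have e2 : ((α ^ (k+m+1) : ℝ))⁻¹ = (α ^ k)⁻¹ * ((α ^ (m+1) : ℝ))⁻¹ := by
                rw [← mul_inv, ← pow_add]
                ring_nf
              have e3 : (α ^ k : ℝ)⁻¹ * ((α ^ (m+1) : ℝ))⁻¹ ≤ (α ^ k)⁻¹ * s :=
                mul_le_mul_of_nonneg_left hs1 (by positivity)
              linarith
            linarith
          calc μ (ball y ρ ∩ E m M R) ≤ μ (ball x ((α ^ k)⁻¹ * s)) :=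
                measure_mono ((Set.inter_subset_left).trans hsub1)
            _ ≤ ((ENNReal.ofReal β)⁻¹) ^ k * μ (ball x s) := decay_aux μ α β hα hβ1 x s hnd k
            _ ≤ ((ENNReal.ofReal β)⁻¹) ^ k * (M : ℝ≥0∞) := mul_le_mul_right hsM _
        · rw [Set.not_nonempty_iff_eq_empty] at hne
          simp [hne]
      -- assemble
      have hS1 : μ (E m M R) ≤ ∑ y ∈ t, μ (ball y ρ ∩ E m M R) := by
        refine le_trans (measure_mono ?_) (measure_biUnion_finset_le t _)
        intro x hx
        have hxb : x ∈ ball x0 R' := by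
          rw [mem_ball]
          exact hx.1
        obtain ⟨y, hy, hxy⟩ : ∃ y ∈ t, x ∈ ball y ρ := by simpa using hcov hxb
        exact Set.mem_biUnion hy ⟨hxy, hx⟩
      have hS2 : μ (E m M R) ≤
          (t.card : ℝ≥0∞) * (((ENNReal.ofReal β)⁻¹) ^ k * (M : ℝ≥0∞)) := by
        refine hS1.trans ?_
        have := Finset.sum_le_card_nsmul t (fun y => μ (ball y ρ ∩ E m M R))
          (((ENNReal.ofReal β)⁻¹) ^ k * (M : ℝ≥0∞)) (fun y _ => hball y)
        simpa [nsmul_eq_mul] using this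
      have hS3 : μ (E m M R) ≤
          ENNReal.ofReal ((N0:ℝ) ^ j * ((β⁻¹) ^ k * (M:ℝ))) := by
        refine hS2.trans ?_
        have hcast : ((ENNReal.ofReal β)⁻¹) ^ k = ENNReal.ofReal ((β⁻¹) ^ k) := by
          rw [← ENNReal.ofReal_inv_of_pos hβ0, ← ENNReal.ofReal_pow (by positivity)]
        rw [hcast, ← ENNReal.ofReal_natCast M, ← ENNReal.ofReal_natCast t.card,
          ← ENNReal.ofReal_mul (by positivity), ← ENNReal.ofReal_mul (by positivity)]
        refine ENNReal.ofReal_le_ofReal ?_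
        have h1 : (t.card : ℝ) ≤ (N0:ℝ) ^ j := by exact_mod_cast hcard
        have hx : (0:ℝ) ≤ (β⁻¹) ^ k * (M:ℝ) := by positivity
        exact mul_le_mul_of_nonneg_right h1 hx
      refine hS3.trans (ENNReal.ofReal_le_ofReal ?_)
      -- real inequality
      have hN0pos : (0:ℝ) < (N0:ℝ) := by exact_mod_cast hN1
      have e0 : (N0:ℝ) ^ j = ((2:ℝ) ^ j) ^ n := by
        have : (2:ℝ) ^ n = (N0:ℝ) := Real.rpow_logb two_pos (by norm_num) hN0pos
        rw [← this, ← Real.rpow_natCast ((2:ℝ) ^ n) j, ← Real.rpow_mul (by norm_num),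
          mul_comm, Real.rpow_mul (by norm_num), Real.rpow_natCast]
      have e1 : ((2:ℝ) ^ j) ^ n ≤ (C1 * α ^ k) ^ n :=
        Real.rpow_le_rpow (by positivity) hj2 hn0
      have e2 : ((C1 * α ^ k) : ℝ) ^ n = C1 ^ n * (α ^ n) ^ k := by
        rw [Real.mul_rpow (by positivity) (by positivity)]
        congr 1
        rw [← Real.rpow_natCast α k, ← Real.rpow_mul hα0.le, mul_comm,
          Real.rpow_mul hα0.le, Real.rpow_natCast]
      have e3 : c * q ^ k = C1 ^ n * ((α ^ n) ^ k * ((β⁻¹) ^ k * M)) := by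
        rw [hc, hq, mul_pow]
        ring
      rw [e3, e0]
      have hnn : (0:ℝ) ≤ (β⁻¹) ^ k * M := by positivity
      calc ((2:ℝ) ^ j) ^ n * ((β⁻¹) ^ k * (M:ℝ))
          ≤ (C1 * α ^ k) ^ n * ((β⁻¹) ^ k * (M:ℝ)) := mul_le_mul_of_nonneg_right e1 hnn
        _ = C1 ^ n * ((α ^ n) ^ k * ((β⁻¹) ^ k * M)) := by rw [e2]; ring
    -- take k → ∞
    have htend : Filter.Tendsto (fun k : ℕ => ENNReal.ofReal (c * q ^ k))
        Filter.atTop (nhds 0) := by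
      have h1 := (tendsto_pow_atTop_nhds_zero_of_lt_one hq0 hq1).const_mul c
      rw [mul_zero] at h1
      have h2 := ENNReal.tendsto_ofReal h1
      rwa [ENNReal.ofReal_zero] at h2
    have := ge_of_tendsto' htend hk
    exact le_antisymm this zero_le
  have hBadNull : μ Bad = 0 :=
    measure_mono_null hBadSub
      (measure_iUnion_null fun m => measure_iUnion_null fun M => measure_iUnion_null fun R =>
        hEnull m M R)
  -- conclude
  rw [ae_iff]
  refine measure_mono_null ?_ hBadNull
  intro x hx
  simp only [Set.mem_setOf_eq] at hx
  push_neg at hx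
  obtain ⟨r, hr, ε, hε, hx⟩ := hx
  obtain ⟨J, hJ⟩ := pow_unbounded_of_one_lt (r / ε) hα
  have hJε : (α ^ J)⁻¹ * r < ε := by
    rw [div_lt_iff₀ hε] at hJ
    rw [inv_mul_lt_iff₀ (by positivity)]
    linarith
  refine ⟨(α ^ J)⁻¹ * r, by positivity, fun k => ?_⟩
  have hrw : (α ^ k)⁻¹ * ((α ^ J)⁻¹ * r) = (α ^ (k + J))⁻¹ * r := by
    rw [pow_add, mul_inv]
    ring
  rw [hrw]
  refine hx (k + J) ?_
  have hle : (α ^ (k + J) : ℝ)⁻¹ * r ≤ (α ^ J)⁻¹ * r := by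
    apply mul_le_mul_of_nonneg_right _ hr.le
    apply inv_anti₀ (by positivity)
    exact pow_le_pow_right₀ hα.le (Nat.le_add_left J k)
  linarith

end
end
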